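/- Let d ≥ 1. There exist constants c > 0 and C > 0 (depending only on d) such that the following holds: if 0 < ε ≤ c, 0 < λ ≤ ε, L = ε⁶λ, and A ⊆ [0,1]^d is measurable with |A| > 0 satisfying |A ∩ (t + Q_L)| / |Q_L| ≤ (1 + ε⁴)|A| for every t ∈ ℝ^d, then the Lebesgue measure of the set { t ∈ ℝ^d : 0 < |A ∩ (t + Q_L)| / |Q_L| ≤ (1 − ε²)|A| } is at most C ε². -/

import Mathlib

open MeasureTheory

noncomputable section

/-- The cube `Q_N = [-N/2, N/2]^d` in `ℝ^d`. -/
def cube (d : ℕ) (N : ℝ) : Set (EuclideanSpace ℝ (Fin d)) :=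
  {x | ∀ i, |x i| ≤ N / 2}

/-- The quantity `|A ∩ (t + Q_N)| / |Q_N|`. -/
def densityRatio {d : ℕ} (A : Set (EuclideanSpace ℝ (Fin d))) (N : ℝ)
    (t : EuclideanSpace ℝ (Fin d)) : ℝ :=
  (volume (A ∩ (fun x => t + x) '' cube d N)).toReal / N ^ d

/-- The upper Banach density `δ*(A) = lim_{N→∞} sup_t |A ∩ (t+Q_N)|/|Q_N|`. -/
def upperBanachDensity {d : ℕ} (A : Set (EuclideanSpace ℝ (Fin d))) : ℝ :=
  Filter.limsup (fun N : ℝ => ⨆ t, densityRatio A N t) Filter.atTop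

/-- The unit cube `[0,1]^d` in `ℝ^d`. -/
def unitCube (d : ℕ) : Set (EuclideanSpace ℝ (Fin d)) :=
  {x | ∀ i, 0 ≤ x i ∧ x i ≤ 1}

open ENNReal Set

/-- Auxiliary: axis-parallel box `[a,b]^d`. -/
def auxBox (d : ℕ) (a b : ℝ) : Set (EuclideanSpace ℝ (Fin d)) :=
  {x | ∀ i, a ≤ x i ∧ x i ≤ b}

lemma auxBox_eq (d : ℕ) (a b : ℝ) :
    auxBox d a b = (MeasurableEquiv.toLp 2 (Fin d → ℝ)).symm ⁻¹'
      (Set.univ.pi fun _ : Fin d => Set.Icc a b) := by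
  ext x
  simp only [auxBox, Set.mem_preimage, Set.mem_univ_pi, Set.mem_Icc, Set.mem_setOf_eq]
  rfl

lemma measurableSet_auxBox (d : ℕ) (a b : ℝ) : MeasurableSet (auxBox d a b) := by
  rw [auxBox_eq]
  exact (MeasurableEquiv.toLp 2 (Fin d → ℝ)).symm.measurable
    (MeasurableSet.univ_pi fun _ => measurableSet_Icc)

lemma volume_auxBox (d : ℕ) (a b : ℝ) :
    volume (auxBox d a b) = ENNReal.ofReal (b - a) ^ d := by
  rw [auxBox_eq, (EuclideanSpace.volume_preserving_symm_measurableEquiv_toLp (Fin d)).measure_preimage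
    (MeasurableSet.univ_pi fun _ => measurableSet_Icc).nullMeasurableSet,
    volume_pi_pi]
  simp [Real.volume_Icc, Finset.prod_const]

lemma cube_eq_auxBox (d : ℕ) (N : ℝ) : cube d N = auxBox d (-(N/2)) (N/2) := by
  ext x; simp [cube, auxBox, abs_le]

lemma measurableSet_cube (d : ℕ) (N : ℝ) : MeasurableSet (cube d N) := by
  rw [cube_eq_auxBox]; exact measurableSet_auxBox d _ _

lemma volume_cube (d : ℕ) {N : ℝ} (h : 0 ≤ N) :
    volume (cube d N) = ENNReal.ofReal N ^ d := by
  rw [cube_eq_auxBox, volume_auxBox d]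
  norm_num

lemma volume_inter_translate {d : ℕ} (A Q : Set (EuclideanSpace ℝ (Fin d)))
    (hA : MeasurableSet A) (hQ : MeasurableSet Q) (t : EuclideanSpace ℝ (Fin d)) :
    volume (A ∩ (fun x => t + x) '' Q)
      = ∫⁻ x, A.indicator (1 : EuclideanSpace ℝ (Fin d) → ℝ≥0∞) x
          * Q.indicator (1 : EuclideanSpace ℝ (Fin d) → ℝ≥0∞) (x - t) := by
  have himg : (fun x => t + x) '' Q = {x | x - t ∈ Q} := by
    ext y; constructor
    · rintro ⟨x, hx, rfl⟩; simpa using hx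
    · intro hy; exact ⟨y - t, hy, by simp⟩
  rw [himg]
  have hmeas : MeasurableSet (A ∩ {x | x - t ∈ Q}) :=
    hA.inter ((measurable_id.sub measurable_const) hQ)
  rw [← lintegral_indicator_one hmeas]
  refine lintegral_congr fun x => ?_
  by_cases h1 : x ∈ A <;> by_cases h2 : x - t ∈ Q <;>
    simp [Set.indicator, h1, h2]

lemma lintegral_volume_inter_translate {d : ℕ} (A Q : Set (EuclideanSpace ℝ (Fin d)))
    (hA : MeasurableSet A) (hQ : MeasurableSet Q) :
    ∫⁻ t, volume (A ∩ (fun x => t + x) '' Q) = volume A * volume Q := by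
  calc ∫⁻ t, volume (A ∩ (fun x => t + x) '' Q)
      = ∫⁻ t, ∫⁻ x, A.indicator (1 : EuclideanSpace ℝ (Fin d) → ℝ≥0∞) x
          * Q.indicator (1 : EuclideanSpace ℝ (Fin d) → ℝ≥0∞) (x - t) := by
        exact lintegral_congr fun t => volume_inter_translate A Q hA hQ t
    _ = ∫⁻ x, ∫⁻ t, A.indicator (1 : EuclideanSpace ℝ (Fin d) → ℝ≥0∞) x
          * Q.indicator (1 : EuclideanSpace ℝ (Fin d) → ℝ≥0∞) (x - t) := by
        refine lintegral_lintegral_swap ?_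
        exact (((measurable_const.indicator hA).comp measurable_snd).mul
          ((measurable_const.indicator hQ).comp (measurable_snd.sub measurable_fst))).aemeasurable
    _ = ∫⁻ x, A.indicator (1 : EuclideanSpace ℝ (Fin d) → ℝ≥0∞) x * volume Q := by
        refine lintegral_congr fun x => ?_
        have hm : Measurable fun t : EuclideanSpace ℝ (Fin d) =>
            Q.indicator (1 : EuclideanSpace ℝ (Fin d) → ℝ≥0∞) (x - t) :=
          (measurable_const.indicator hQ).comp (measurable_const.sub measurable_id)
        rw [lintegral_const_mul _ hm]
        congr 1
        exact ((Measure.measurePreserving_sub_left volume x).lintegral_comp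
          (measurable_const.indicator hQ)).trans (lintegral_indicator_one hQ)
    _ = volume A * volume Q := by
        have hm2 : Measurable (A.indicator (1 : EuclideanSpace ℝ (Fin d) → ℝ≥0∞)) :=
          measurable_const.indicator hA
        rw [lintegral_mul_const _ hm2, lintegral_indicator_one hA]

lemma measurable_volume_inter_translate {d : ℕ} (A Q : Set (EuclideanSpace ℝ (Fin d)))
    (hA : MeasurableSet A) (hQ : MeasurableSet Q) :
    Measurable (fun t => volume (A ∩ (fun x => t + x) '' Q)) := by
  have : (fun t => volume (A ∩ (fun x => t + x) '' Q))
      = fun t => ∫⁻ x, A.indicator (1 : EuclideanSpace ℝ (Fin d) → ℝ≥0∞) x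
          * Q.indicator (1 : EuclideanSpace ℝ (Fin d) → ℝ≥0∞) (x - t) :=
    funext fun t => volume_inter_translate A Q hA hQ t
  rw [this]
  exact Measurable.lintegral_prod_right'
    (f := fun p : _ × _ => A.indicator (1 : EuclideanSpace ℝ (Fin d) → ℝ≥0∞) p.2
      * Q.indicator (1 : EuclideanSpace ℝ (Fin d) → ℝ≥0∞) (p.2 - p.1))
    (((measurable_const.indicator hA).comp measurable_snd).mul
      ((measurable_const.indicator hQ).comp (measurable_snd.sub measurable_fst)))

lemma support_subset_auxBox {d : ℕ} {L : ℝ} {A : Set (EuclideanSpace ℝ (Fin d))}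
    (hsub : A ⊆ unitCube d) {t : EuclideanSpace ℝ (Fin d)}
    (ht : (A ∩ (fun x => t + x) '' cube d L).Nonempty) :
    t ∈ auxBox d (-(L/2)) (1 + L/2) := by
  obtain ⟨z, hzA, y, hy, hzy⟩ := ht
  intro i
  have h1 := (hsub hzA) i
  have h2 := abs_le.mp (hy i)
  have h3 : z i = t i + y i := by rw [← hzy]; rfl
  constructor <;> linarith

lemma one_add_pow_le (n : ℕ) {x : ℝ} (h0 : 0 ≤ x) (h1 : x ≤ 1) :
    (1 + x) ^ n ≤ 1 + ((2:ℝ) ^ n - 1) * x := by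
  induction n with
  | zero => norm_num
  | succ n ih =>
    have h2 : (1:ℝ) ≤ 2 ^ n := by exact_mod_cast Nat.one_le_two_pow
    rw [pow_succ, pow_succ]
    nlinarith [ih, mul_le_mul_of_nonneg_right ih (by linarith : (0:ℝ) ≤ 1 + x),
      mul_nonneg (mul_nonneg (sub_nonneg.mpr h2) h0) (sub_nonneg.mpr h1)]

set_option maxHeartbeats 1000000 in
/-- If `A ⊆ [0,1]^d` has positive measure and satisfies the pointwise bound
`|A ∩ (t+Q_L)|/|Q_L| ≤ (1+ε⁴)|A|` for all `t`, with `L = ε⁶λ`, `0 < λ ≤ ε ≤ c`, then the set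
of `t` for which `0 < |A ∩ (t+Q_L)|/|Q_L| ≤ (1-ε²)|A|` has measure at most `Cε²`. -/
theorem small_exceptional_set_from_pointwise_bound (d : ℕ) (hd : 1 ≤ d) :
    ∃ c C : ℝ, 0 < c ∧ 0 < C ∧
      ∀ (ε lam : ℝ) (A : Set (EuclideanSpace ℝ (Fin d))),
        MeasurableSet A → A ⊆ unitCube d → 0 < (volume A).toReal →
        0 < ε → ε ≤ c → 0 < lam → lam ≤ ε →
        (∀ t, densityRatio A (ε ^ 6 * lam) t ≤ (1 + ε ^ 4) * (volume A).toReal) →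
        volume {t : EuclideanSpace ℝ (Fin d) |
            0 < densityRatio A (ε ^ 6 * lam) t ∧
            densityRatio A (ε ^ 6 * lam) t ≤ (1 - ε ^ 2) * (volume A).toReal} ≤
          ENNReal.ofReal (C * ε ^ 2) := by
  refine ⟨1, 2 ^ (d + 1), one_pos, by positivity, ?_⟩
  intro ε lam A hA hsub ha_pos hε hε1 hlam hlamε hbound
  set L : ℝ := ε ^ 6 * lam with hLdef
  have hL : 0 < L := by positivity
  have hq : 0 < L ^ d := by positivity
  set a : ℝ := (volume A).toReal with hadef
  set Q : Set (EuclideanSpace ℝ (Fin d)) := cube d L with hQdef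
  set g : EuclideanSpace ℝ (Fin d) → ℝ≥0∞ :=
    fun t => volume (A ∩ (fun x => t + x) '' Q) with hgdef
  have hQm : MeasurableSet Q := measurableSet_cube d L
  have hgm : Measurable g := measurable_volume_inter_translate A Q hA hQm
  have hgint : ∫⁻ t, g t = volume A * volume Q :=
    lintegral_volume_inter_translate A Q hA hQm
  have hvolQ : volume Q = ENNReal.ofReal (L ^ d) := by
    rw [hQdef, volume_cube d hL.le, ← ENNReal.ofReal_pow hL.le]
  have hAfin : volume A ≠ ⊤ := by
    have h1 : volume A ≤ volume (unitCube d) := measure_mono hsub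
    have h2 : volume (unitCube d) = 1 := by
      have he : unitCube d = auxBox d 0 1 := rfl
      rw [he, volume_auxBox d]; simp
    rw [h2] at h1
    exact (h1.trans_lt one_lt_top).ne
  have hgfin : ∀ t, g t ≠ ⊤ := fun t =>
    ((measure_mono Set.inter_subset_left).trans_lt (lt_top_iff_ne_top.mpr hAfin)).ne
  have hgd : ∀ t, densityRatio A L t = (g t).toReal / L ^ d := fun t => rfl
  set E := {t : EuclideanSpace ℝ (Fin d) |
      0 < densityRatio A L t ∧ densityRatio A L t ≤ (1 - ε ^ 2) * a} with hEdef
  have hdm : Measurable (fun t => densityRatio A L t) := by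
    have : (fun t => densityRatio A L t) = fun t => (g t).toReal / L ^ d :=
      funext fun t => hgd t
    rw [this]
    exact hgm.ennreal_toReal.div_const _
  have hE : MeasurableSet E :=
    (measurableSet_lt measurable_const hdm).inter (measurableSet_le hdm measurable_const)
  set S := auxBox d (-(L/2)) (1 + L/2) with hSdef
  have hSm : MeasurableSet S := measurableSet_auxBox d _ _
  have hvolS : volume S = ENNReal.ofReal (1 + L) ^ d := by
    rw [hSdef, volume_auxBox d, show (1 + L / 2 - -(L / 2)) = 1 + L by ring]
  have hg0 : ∀ t, t ∉ S → g t = 0 := by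
    intro t hts
    have hempty : A ∩ (fun x => t + x) '' Q = ∅ := by
      by_contra hne
      exact hts (support_subset_auxBox hsub (Set.nonempty_iff_ne_empty.mpr hne))
    show volume (A ∩ (fun x => t + x) '' Q) = 0
    rw [hempty]
    exact measure_empty
  have hES : E ⊆ S := by
    intro t ht
    by_contra hts
    have h0 : densityRatio A L t = 0 := by
      rw [hgd t, hg0 t hts]
      simp
    obtain ⟨hpos, -⟩ := ht
    rw [h0] at hpos
    exact lt_irrefl 0 hpos
  have hμS : volume S ≠ ⊤ := by
    rw [hvolS]; exact pow_ne_top ofReal_ne_top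
  have hμE_fin : volume E ≠ ⊤ :=
    ((measure_mono hES).trans_lt (lt_top_iff_ne_top.mpr hμS)).ne
  have hμdiff_fin : volume (S \ E) ≠ ⊤ :=
    ((measure_mono Set.diff_subset).trans_lt (lt_top_iff_ne_top.mpr hμS)).ne
  set m : ℝ := (volume E).toReal with hmdef
  set r : ℝ := (volume (S \ E)).toReal with hrdef
  set s : ℝ := (volume S).toReal with hsdef
  have hs_eq : s = (1 + L) ^ d := by
    rw [hsdef, hvolS, ← ENNReal.ofReal_pow (by linarith), ENNReal.toReal_ofReal
      (by positivity)]
  have hmr : m + r = s := by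
    rw [hmdef, hrdef, hsdef, ← ENNReal.toReal_add hμE_fin hμdiff_fin]
    congr 1
    have h := measure_inter_add_diff (μ := (volume : Measure (EuclideanSpace ℝ (Fin d)))) S hE
    rw [Set.inter_eq_self_of_subset_right hES] at h
    exact h
  -- pointwise bounds for g
  have key : ∀ (b : ℝ) (t), densityRatio A L t ≤ b → g t ≤ ENNReal.ofReal (b * L ^ d) := by
    intro b t hb
    rw [← ENNReal.ofReal_toReal (hgfin t)]
    apply ENNReal.ofReal_le_ofReal
    rw [hgd t] at hb
    calc (g t).toReal = (g t).toReal / L ^ d * L ^ d := by field_simp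
      _ ≤ b * L ^ d := mul_le_mul_of_nonneg_right hb hq.le
  -- the main integral inequality
  have hEbound : ∫⁻ t in E, g t ≤ ENNReal.ofReal ((1 - ε ^ 2) * a * L ^ d) * volume E := by
    calc ∫⁻ t in E, g t
        ≤ ∫⁻ _ in E, ENNReal.ofReal ((1 - ε ^ 2) * a * L ^ d) :=
          setLIntegral_mono measurable_const fun t ht => by
            simpa [mul_assoc] using key ((1 - ε ^ 2) * a) t ht.2
      _ = ENNReal.ofReal ((1 - ε ^ 2) * a * L ^ d) * volume E := setLIntegral_const _ _
  have hcompl : ∫⁻ t in Eᶜ, g t = ∫⁻ t in Eᶜ ∩ S, g t := by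
    have hpt : ∀ t, g t = S.indicator g t := by
      intro t
      by_cases h : t ∈ S
      · rw [Set.indicator_of_mem h]
      · rw [Set.indicator_of_notMem h, hg0 t h]
    calc ∫⁻ t in Eᶜ, g t = ∫⁻ t in Eᶜ, S.indicator g t :=
          lintegral_congr fun t => hpt t
      _ = ∫⁻ t in S, g t ∂(volume.restrict Eᶜ) := lintegral_indicator hSm g
      _ = ∫⁻ t in Eᶜ ∩ S, g t := by
          rw [Measure.restrict_restrict hSm, Set.inter_comm]
  have hCbound : ∫⁻ t in Eᶜ ∩ S, g t
      ≤ ENNReal.ofReal ((1 + ε ^ 4) * a * L ^ d) * volume (S \ E) := by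
    have hset : Eᶜ ∩ S = S \ E := by rw [Set.diff_eq, Set.inter_comm]
    rw [hset]
    calc ∫⁻ t in S \ E, g t
        ≤ ∫⁻ _ in S \ E, ENNReal.ofReal ((1 + ε ^ 4) * a * L ^ d) :=
          setLIntegral_mono measurable_const fun t _ => by
            simpa [mul_assoc] using key ((1 + ε ^ 4) * a) t (hbound t)
      _ = _ := setLIntegral_const _ _
  have main : volume A * volume Q
      ≤ ENNReal.ofReal ((1 - ε ^ 2) * a * L ^ d) * volume E
        + ENNReal.ofReal ((1 + ε ^ 4) * a * L ^ d) * volume (S \ E) := by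
    calc volume A * volume Q = ∫⁻ t, g t := hgint.symm
      _ = (∫⁻ t in E, g t) + ∫⁻ t in Eᶜ, g t := (lintegral_add_compl g hE).symm
      _ ≤ _ := add_le_add hEbound (hcompl.le.trans hCbound)
  -- basic real facts
  have hεle1 : ε ≤ 1 := hε1
  have hε2 : ε ^ 2 ≤ 1 := by nlinarith
  have hε4 : ε ^ 4 ≤ 1 := by nlinarith
  have hc1 : (0:ℝ) ≤ (1 - ε ^ 2) * a * L ^ d := by
    have : (0:ℝ) ≤ a := le_of_lt ha_pos
    have h12 : (0:ℝ) ≤ 1 - ε ^ 2 := by linarith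
    positivity
  have hc2 : (0:ℝ) ≤ (1 + ε ^ 4) * a * L ^ d := by positivity
  -- convert main to reals
  have hreal : a * L ^ d ≤ (1 - ε ^ 2) * a * L ^ d * m + (1 + ε ^ 4) * a * L ^ d * r := by
    have hfin : ENNReal.ofReal ((1 - ε ^ 2) * a * L ^ d) * volume E
        + ENNReal.ofReal ((1 + ε ^ 4) * a * L ^ d) * volume (S \ E) ≠ ⊤ :=
      ENNReal.add_ne_top.mpr
        ⟨ENNReal.mul_ne_top ofReal_ne_top hμE_fin, ENNReal.mul_ne_top ofReal_ne_top hμdiff_fin⟩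
    have h := ENNReal.toReal_mono hfin main
    rw [hvolQ, ENNReal.toReal_mul, ENNReal.toReal_ofReal hq.le] at h
    rw [ENNReal.toReal_add (ENNReal.mul_ne_top ofReal_ne_top hμE_fin)
      (ENNReal.mul_ne_top ofReal_ne_top hμdiff_fin), ENNReal.toReal_mul, ENNReal.toReal_mul,
      ENNReal.toReal_ofReal hc1, ENNReal.toReal_ofReal hc2] at h
    exact h
  clear_value m r s
  -- divide out a * L^d
  have h1 : 1 ≤ (1 - ε ^ 2) * m + (1 + ε ^ 4) * r := by
    have hapos : 0 < a * L ^ d := by positivity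
    rw [← mul_le_mul_iff_right₀ hapos]
    nlinarith [hreal]
  -- bound s
  have hL4 : L ≤ ε ^ 4 := by
    have h7 : L ≤ ε ^ 7 := by
      rw [hLdef]
      calc ε ^ 6 * lam ≤ ε ^ 6 * ε := by nlinarith [pow_pos hε 6]
        _ = ε ^ 7 := by ring
    have : ε ^ 7 ≤ ε ^ 4 := pow_le_pow_of_le_one hε.le hεle1 (by norm_num)
    linarith
  have hsle : s ≤ (1 + ε ^ 4) ^ d := by
    rw [hs_eq]
    exact pow_le_pow_left₀ (by linarith) (by linarith) d
  have hpow : (1 + ε ^ 4) ^ (d + 1) ≤ 1 + ((2:ℝ) ^ (d + 1) - 1) * ε ^ 4 :=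
    one_add_pow_le (d + 1) (by positivity) hε4
  have h2 : (1 + ε ^ 4) * s ≤ (1 + ε ^ 4) ^ (d + 1) := by
    rw [pow_succ]
    calc (1 + ε ^ 4) * s ≤ (1 + ε ^ 4) * (1 + ε ^ 4) ^ d := by nlinarith [hsle]
      _ = (1 + ε ^ 4) ^ d * (1 + ε ^ 4) := by ring
  have hm0 : 0 ≤ m := by rw [hmdef]; exact ENNReal.toReal_nonneg
  have hr0 : 0 ≤ r := by rw [hrdef]; exact ENNReal.toReal_nonneg
  have hfinal : m ≤ 2 ^ (d + 1) * ε ^ 2 := by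
    have hr_eq : r = s - m := by linarith
    rw [hr_eq] at h1
    set K : ℝ := (2:ℝ) ^ (d + 1) with hKdef
    have hK : (1:ℝ) ≤ K := by rw [hKdef]; exact_mod_cast Nat.one_le_two_pow
    have h3 : (1 + ε ^ 4) * s ≤ 1 + (K - 1) * ε ^ 4 := h2.trans hpow
    clear_value K
    have h4 : ε ^ 2 * m ≤ (K - 1) * ε ^ 4 := by
      nlinarith [mul_nonneg (pow_nonneg hε.le 4) hm0]
    have h5 : m ≤ (K - 1) * ε ^ 2 := by
      nlinarith [h4, pow_pos hε 2, sq_nonneg (ε ^ 2)]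
    nlinarith [pow_pos hε 2]
  calc volume E = ENNReal.ofReal m := by rw [hmdef]; exact (ENNReal.ofReal_toReal hμE_fin).symm
    _ ≤ ENNReal.ofReal (2 ^ (d + 1) * ε ^ 2) := ENNReal.ofReal_le_ofReal hfinal
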